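/- For every integer h ≥ 0 and every integer n ≥ 1, the probability p_n^{(h)} equals the coefficient of z^n in the formal power series 2 z^h · (rev(T_{h+1})(z))^{-1} ∈ ℚ⟦z⟧, where rev(T_{h+1})(z) = z^{h+1} T_{h+1}(1/z) denotes the reversed Chebyshev polynomial of the first kind of degree h+1 (invertible in ℚ⟦z⟧ since its constant term is the leading coefficient 2^h of T_{h+1}). Equivalently, the probability that the random walk of length n on ℕ₀ with reflecting barrier at 0 stays in [0,h] and ends at h equals 2 [z^{n+1}] 1/T_{h+1}(1/z) for h ≥ 0 and n ≥ 1. -/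

import Mathlib

/-- Partial sum `S_k` of the `±1`-walk encoded by `ε : Fin n → Bool`
(`true` = step `+1`, `false` = step `-1`). -/
def walkSum (n : ℕ) (ε : Fin n → Bool) (k : ℕ) : ℤ :=
  ∑ i : Fin n, if (i : ℕ) < k then (if ε i then 1 else -1) else 0

/-- `V n h`: number of `±1`-paths of length `n` with `|S_k| ≤ h` for all `k` and `|S_n| = h`. -/
noncomputable def V (n h : ℕ) : ℕ :=
  Nat.card {ε : Fin n → Bool //
    (∀ k ≤ n, |walkSum n ε k| ≤ (h : ℤ)) ∧ |walkSum n ε n| = (h : ℤ)}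

open Polynomial Polynomial.Chebyshev



def walkAdm (h n : ℕ) (ε : Fin n → Bool) : Prop :=
  ∀ k ≤ n, |walkSum n ε k| ≤ (h : ℤ)

noncomputable def Ncount (h n : ℕ) (s : ℤ) : ℕ :=
  Nat.card {ε : Fin n → Bool // walkAdm h n ε ∧ walkSum n ε n = s}

theorem walkSum_snoc_le {n : ℕ} (ε : Fin n → Bool) (b : Bool) {k : ℕ} (hk : k ≤ n) :
    walkSum (n+1) (Fin.snoc ε b) k = walkSum n ε k := by
  unfold walkSum
  rw [Fin.sum_univ_castSucc]
  have hlast : ¬ ((Fin.last n : ℕ) < k) := by simp [Fin.last]; omega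
  rw [if_neg hlast, add_zero]
  refine Finset.sum_congr rfl fun i _ => ?_
  rw [Fin.snoc_castSucc]
  rfl

theorem walkSum_snoc_last {n : ℕ} (ε : Fin n → Bool) (b : Bool) :
    walkSum (n+1) (Fin.snoc ε b) (n+1) = walkSum n ε n + (if b then 1 else -1) := by
  unfold walkSum
  rw [Fin.sum_univ_castSucc]
  have hlast : ((Fin.last n : ℕ) < n+1) := by simp [Fin.last]
  rw [if_pos hlast, Fin.snoc_last]
  congr 1
  refine Finset.sum_congr rfl fun i _ => ?_
  rw [Fin.snoc_castSucc]
  have : (i:ℕ) < n := i.2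
  simp only [Fin.coe_castSucc]
  rw [if_pos (by omega), if_pos this]

theorem Ncount_zero (h : ℕ) (s : ℤ) : Ncount h 0 s = if s = 0 then 1 else 0 := by
  unfold Ncount
  have hw : ∀ (ε : Fin 0 → Bool) (k : ℕ), walkSum 0 ε k = 0 := by
    intro ε k; unfold walkSum; simp
  split_ifs with hs
  · subst hs
    rw [Nat.card_eq_one_iff_unique]
    constructor
    · constructor
      rintro ⟨ε, -⟩ ⟨ε', -⟩
      ext i
      exact i.elim0
    · exact ⟨⟨Fin.elim0, fun k _ => by rw [hw]; simp, hw _ _⟩⟩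
  · rw [Nat.card_eq_zero]
    left
    exact ⟨fun ⟨ε, _, h2⟩ => hs (by rw [← h2, hw])⟩

theorem Ncount_out {h n : ℕ} {s : ℤ} (hs : (h:ℤ) < |s|) : Ncount h n s = 0 := by
  unfold Ncount
  rw [Nat.card_eq_zero]
  left
  exact ⟨fun ⟨ε, h1, h2⟩ => absurd (h2 ▸ h1 n le_rfl) (by omega)⟩

theorem Ncount_neg (h n : ℕ) (s : ℤ) : Ncount h n (-s) = Ncount h n s := by
  unfold Ncount
  apply Nat.card_congr
  have flip : ∀ (ε : Fin n → Bool) (k:ℕ), walkSum n (fun i => !(ε i)) k = - walkSum n ε k := by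
    intro ε k
    unfold walkSum
    rw [← Finset.sum_neg_distrib]
    refine Finset.sum_congr rfl fun i _ => ?_
    by_cases hik : (i:ℕ) < k <;> cases hb : ε i <;> simp [hb, hik]
  refine ⟨fun ⟨ε, h1, h2⟩ => ⟨fun i => !(ε i), fun k hk => by rw [flip]; rw [abs_neg]; exact h1 k hk,
      by rw [flip, h2]; ring⟩,
    fun ⟨ε, h1, h2⟩ => ⟨fun i => !(ε i), fun k hk => by rw [flip]; rw [abs_neg]; exact h1 k hk,
      by rw [flip, h2]⟩, ?_, ?_⟩
  · rintro ⟨ε, h1, h2⟩; ext i; simp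
  · rintro ⟨ε, h1, h2⟩; ext i; simp

def boolSplit {α : Type*} (P : Bool → α → Prop) :
    {p : Bool × α // P p.1 p.2} ≃ {a // P true a} ⊕ {a // P false a} where
  toFun := fun x => match x with
    | ⟨(true, a), hp⟩ => Sum.inl ⟨a, hp⟩
    | ⟨(false, a), hp⟩ => Sum.inr ⟨a, hp⟩
  invFun := fun x => match x with
    | Sum.inl ⟨a, ha⟩ => ⟨(true, a), ha⟩
    | Sum.inr ⟨a, ha⟩ => ⟨(false, a), ha⟩
  left_inv := by rintro ⟨⟨b, a⟩, hp⟩; cases b <;> rfl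
  right_inv := by rintro (⟨a, ha⟩ | ⟨a, ha⟩) <;> rfl

theorem Ncount_succ (h n : ℕ) (s : ℤ) :
    Ncount h (n+1) s = if |s| ≤ (h:ℤ) then Ncount h n (s-1) + Ncount h n (s+1) else 0 := by
  by_cases hs : |s| ≤ (h:ℤ)
  · rw [if_pos hs]
    unfold Ncount
    rw [← Nat.card_sum]
    apply Nat.card_congr
    have e1 : {p : Bool × (Fin n → Bool) //
        walkAdm h n p.2 ∧ walkSum n p.2 n + (if p.1 then 1 else -1) = s} ≃
        {ε' : Fin (n+1) → Bool // walkAdm h (n+1) ε' ∧ walkSum (n+1) ε' (n+1) = s} := by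
      refine Equiv.subtypeEquiv (Fin.snocEquiv (fun _ => Bool)) fun ⟨b, ε⟩ => ?_
      have he : (Fin.snocEquiv (fun _ => Bool)) (b, ε) = Fin.snoc ε b := by
        ext i
        simp [Fin.snocEquiv]
      rw [he]
      constructor
      · rintro ⟨h1, h2⟩
        refine ⟨?_, ?_⟩
        · intro k hk
          rcases Nat.lt_or_ge k (n+1) with hk' | hk'
          · rw [walkSum_snoc_le ε b (by omega)]
            exact h1 k (by omega)
          · have : k = n + 1 := by omega
            subst this
            rw [walkSum_snoc_last, h2]
            exact hs
        · rw [walkSum_snoc_last, h2]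
      · rintro ⟨h1, h2⟩
        rw [walkSum_snoc_last] at h2
        refine ⟨fun k hk => ?_, h2⟩
        have := h1 k (by omega)
        rwa [walkSum_snoc_le ε b hk] at this
    refine e1.symm.trans (Equiv.trans (boolSplit
      (fun b ε => walkAdm h n ε ∧ walkSum n ε n + (if b then 1 else -1) = s))
      (Equiv.sumCongr ?_ ?_))
    · exact Equiv.subtypeEquivRight fun ε => by
        constructor
        · rintro ⟨h1, h2⟩; simp at h2; exact ⟨h1, by omega⟩
        · rintro ⟨h1, h2⟩; exact ⟨h1, by simp; omega⟩
    · exact Equiv.subtypeEquivRight fun ε => by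
        constructor
        · rintro ⟨h1, h2⟩; simp at h2; exact ⟨h1, by omega⟩
        · rintro ⟨h1, h2⟩; exact ⟨h1, by simp; omega⟩
  · rw [if_neg hs]
    exact Ncount_out (by omega)

theorem T_facts : ∀ m : ℕ, (T ℚ (m:ℤ)) ≠ 0 ∧ (T ℚ (m:ℤ)).natDegree = m := by
  intro m
  induction m using Nat.twoStepInduction with
  | zero => simp [T_zero]
  | one => simp [T_one]
  | more m ih1 ih2 =>
    obtain ⟨h1, hd1⟩ := ih1
    obtain ⟨h2, hd2⟩ := ih2
    have key : T ℚ ((m:ℤ)+2) = 2 * X * T ℚ ((m:ℤ)+1) - T ℚ (m:ℤ) := T_add_two ℚ m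
    have hcast : ((m:ℤ)+1) = ((m+1 : ℕ) : ℤ) := by push_cast; ring
    rw [hcast] at key
    have hq : ((2:ℚ[X]) * X * T ℚ ((m+1:ℕ):ℤ)).natDegree = m + 2 := by
      rw [natDegree_mul (by simp : (2:ℚ[X]) * X ≠ 0) h2]
      rw [hd2]; simp [natDegree_X]; ring
    have hlt : (T ℚ (m:ℤ)).natDegree < ((2:ℚ[X]) * X * T ℚ ((m+1:ℕ):ℤ)).natDegree := by
      rw [hq, hd1]; omega
    have hdeg : (T ℚ (((m+2:ℕ)):ℤ)).natDegree = m + 2 := by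
      have : (((m+2:ℕ)):ℤ) = (m:ℤ) + 2 := by push_cast; ring
      rw [this, key, natDegree_sub_eq_left_of_natDegree_lt hlt, hq]
    refine ⟨?_, hdeg⟩
    intro h0
    rw [h0] at hdeg; simp at hdeg

theorem reverse_sub_helper (p q : ℚ[X]) (d : ℕ) (hp : p.natDegree = d + 2)
    (hq : q.natDegree = d) (hpq : (p - q).natDegree = d + 2) :
    (p - q).reverse = p.reverse - X^2 * q.reverse := by
  ext n
  rw [coeff_reverse, hpq, coeff_sub, coeff_sub, coeff_reverse, hp,
    show (X^2 * q.reverse : ℚ[X]) = q.reverse * X^2 from by ring, coeff_mul_X_pow']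
  congr 1
  by_cases hn : n ≤ d + 2
  · rw [revAt_le hn]
    by_cases h2 : 2 ≤ n
    · simp only [if_pos h2, coeff_reverse, hq]
      by_cases h3 : n - 2 ≤ d
      · rw [revAt_le h3]; congr 1; omega
      · rw [revAt_eq_self_of_lt (by omega)]
        rw [coeff_eq_zero_of_natDegree_lt (by omega), coeff_eq_zero_of_natDegree_lt (by omega)]
    · simp only [if_neg h2]
      exact coeff_eq_zero_of_natDegree_lt (by omega)
  · rw [revAt_eq_self_of_lt (by omega)]
    rw [if_pos (by omega : 2 ≤ n), coeff_reverse, hq]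
    by_cases h3 : n - 2 ≤ d
    · omega
    · rw [revAt_eq_self_of_lt (by omega)]
      rw [coeff_eq_zero_of_natDegree_lt (by omega), coeff_eq_zero_of_natDegree_lt (by omega)]


noncomputable def chebRev : ℕ → ℚ[X]
  | 0 => 1
  | 1 => 1
  | (m+2) => 2 * chebRev (m+1) - X^2 * chebRev m

noncomputable def chebAux : ℕ → ℚ[X]
  | 0 => 1
  | 1 => 2
  | (m+2) => 2 * chebAux (m+1) - X^2 * chebAux m

theorem reverse_one' : (1:ℚ[X]).reverse = 1 := by
  rw [show (1:ℚ[X]) = Polynomial.C 1 from (map_one Polynomial.C).symm, reverse_C]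

theorem reverse_X' : (X:ℚ[X]).reverse = 1 := by
  have := reverse_X_mul (1:ℚ[X])
  rw [mul_one] at this
  rw [this, reverse_one']

theorem reverse_T_eq : ∀ m : ℕ, (T ℚ (m:ℤ)).reverse = chebRev m := by
  intro m
  induction m using Nat.twoStepInduction with
  | zero => rw [Nat.cast_zero, T_zero]; exact reverse_one'
  | one => rw [Nat.cast_one, T_one]; exact reverse_X'
  | more m ih1 ih2 =>
    have key : T ℚ (((m+2:ℕ)):ℤ) = 2 * X * T ℚ ((m+1:ℕ):ℤ) - T ℚ (m:ℤ) := by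
      have := T_add_two ℚ (m:ℤ)
      push_cast
      convert this using 2 <;> push_cast <;> ring
    have hp : ((2:ℚ[X]) * X * T ℚ ((m+1:ℕ):ℤ)).natDegree = m + 2 := by
      rw [natDegree_mul (by simp : (2:ℚ[X]) * X ≠ 0) (T_facts (m+1)).1]
      rw [(T_facts (m+1)).2]; simp [natDegree_X]; ring
    have hpq : (2 * X * T ℚ ((m+1:ℕ):ℤ) - T ℚ (m:ℤ)).natDegree = m + 2 := by
      rw [← key]; exact (T_facts (m+2)).2
    rw [key, reverse_sub_helper _ _ m hp (T_facts m).2 hpq]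
    have h2X : ((2:ℚ[X]) * X * T ℚ ((m+1:ℕ):ℤ)).reverse = 2 * (T ℚ ((m+1:ℕ):ℤ)).reverse := by
      rw [mul_assoc, reverse_mul_of_domain, reverse_mul_of_domain,
        show (2:ℚ[X]) = Polynomial.C 2 from (map_ofNat Polynomial.C 2).symm, reverse_C, reverse_X']
      ring
    rw [h2X, ih2, ih1]
    show _ = 2 * chebRev (m+1) - X^2 * chebRev m
    rfl

theorem chebRev_eq_aux : ∀ m : ℕ, chebRev (m+2) = chebAux (m+1) - X^2 * chebAux m := by
  intro m
  induction m using Nat.twoStepInduction with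
  | zero => show (2 : ℚ[X]) * 1 - X^2 * 1 = 2 - X^2 * 1; ring
  | one =>
      show (2:ℚ[X]) * chebRev 2 - X^2 * chebRev 1 = chebAux 2 - X^2 * chebAux 1
      show (2:ℚ[X]) * (2 * 1 - X^2 * 1) - X^2 * 1 = (2*2 - X^2*1) - X^2 * 2
      ring
  | more m ih1 ih2 =>
    show (2:ℚ[X]) * chebRev (m+3) - X^2 * chebRev (m+2) = chebAux (m+3) - X^2 * chebAux (m+2)
    rw [ih1, ih2]
    show _ = (2 * chebAux (m+2) - X^2 * chebAux (m+1)) - X^2 * (2 * chebAux (m+1) - X^2 * chebAux m)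
    ring

theorem chebRev_coeff_zero : ∀ m : ℕ, (chebRev (m+1)).coeff 0 = (2:ℚ)^m := by
  intro m
  induction m using Nat.twoStepInduction with
  | zero => simp [chebRev]
  | one =>
      show ((2:ℚ[X]) * chebRev 1 - X^2 * chebRev 0).coeff 0 = (2:ℚ)^1
      simp [chebRev, coeff_X_pow]
  | more m ih1 ih2 =>
    show ((2:ℚ[X]) * chebRev (m+2) - X^2 * chebRev (m+1)).coeff 0 = (2:ℚ)^(m+2)
    rw [coeff_sub, coeff_ofNat_mul, ih2]
    have : ((X:ℚ[X])^2 * chebRev (m+1)).coeff 0 = 0 := by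
      rw [show ((X:ℚ[X])^2 * chebRev (m+1)) = chebRev (m+1) * X^2 from by ring, coeff_mul_X_pow']
      simp
    rw [this]
    ring


-- generating function
open PowerSeries

noncomputable def Qs (h j : ℕ) : PowerSeries ℚ :=
  PowerSeries.mk fun n => (Ncount h n (j:ℤ) : ℚ) / 2^n

theorem Qs_zero (h : ℕ) : Qs h 0 = 1 + PowerSeries.X * Qs h 1 := by
  ext n
  cases n with
  | zero => simp [Qs, Ncount_zero, PowerSeries.coeff_zero_eq_constantCoeff]
  | succ n =>
    rw [map_add, PowerSeries.coeff_succ_X_mul]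
    have h1 : PowerSeries.coeff (R := ℚ) (n+1) 1 = 0 := by simp
    rw [h1, zero_add]
    simp only [Qs, PowerSeries.coeff_mk]
    rw [Ncount_succ]
    rw [if_pos (by simp)]
    rw [show ((0:ℕ):ℤ) - 1 = -((1:ℕ):ℤ) from by norm_num,
      show ((0:ℕ):ℤ) + 1 = ((1:ℕ):ℤ) from by norm_num, Ncount_neg]
    push_cast
    ring

theorem two_eq_C : (2:ℚ⟦X⟧) = PowerSeries.C (R := ℚ) 2 := (map_ofNat _ 2).symm

theorem Qs_succ (h j : ℕ) (hj1 : 1 ≤ j) (hjh : j ≤ h) :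
    2 * Qs h j = PowerSeries.X * (Qs h (j-1) + Qs h (j+1)) := by
  ext n
  rw [two_eq_C, PowerSeries.coeff_C_mul]
  cases n with
  | zero =>
    have hj0 : Ncount h 0 (j:ℤ) = 0 := by
      rw [Ncount_zero, if_neg (by omega : ¬ ((j:ℤ) = 0))]
    simp only [Qs, PowerSeries.coeff_zero_eq_constantCoeff, map_mul]
    simp [hj0, PowerSeries.constantCoeff_X]
  | succ n =>
    rw [PowerSeries.coeff_succ_X_mul, map_add]
    simp only [Qs, PowerSeries.coeff_mk]
    rw [Ncount_succ, if_pos (by rw [abs_of_nonneg (by positivity)]; exact_mod_cast hjh)]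
    rw [show ((j:ℤ)) - 1 = ((j-1:ℕ):ℤ) from by omega, show ((j:ℤ)) + 1 = ((j+1:ℕ):ℤ) from by omega]
    push_cast
    ring

theorem coe_two : ((2:ℚ[X]) : ℚ⟦X⟧) = 2 := by
  rw [show (2:ℚ[X]) = Polynomial.C 2 from (map_ofNat Polynomial.C 2).symm,
    Polynomial.coe_C, ← two_eq_C]

theorem Qs_top (h : ℕ) : Qs h (h+1) = 0 := by
  ext n
  simp only [Qs, PowerSeries.coeff_mk, map_zero]
  rw [Ncount_out (by rw [abs_of_nonneg (by positivity)]; omega : (h:ℤ) < |((h+1:ℕ):ℤ)|)]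
  simp

theorem Qs_key : ∀ (h m : ℕ), m ≤ h →
    (PowerSeries.X : ℚ⟦X⟧)^m * Qs h (h-m) = (chebAux m : ℚ⟦X⟧) * Qs h h := by
  intro h m
  induction m using Nat.twoStepInduction with
  | zero => intro _; simp [chebAux, Polynomial.coe_one]
  | one =>
    intro h1
    have := Qs_succ h h (by omega) le_rfl
    rw [Qs_top, add_zero] at this
    rw [pow_one, ← this, show (chebAux 1 : ℚ[X]) = 2 from rfl, coe_two]
  | more m ih1 ih2 =>
    intro hm
    have key := Qs_succ h (h - (m+1)) (by omega) (by omega)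
    rw [show h - (m+1) - 1 = h - (m+2) from by omega,
        show h - (m+1) + 1 = h - m from by omega] at key
    have e1 := ih2 (by omega)
    have e2 := ih1 (by omega)
    -- multiply key by X^(m+1)
    have key2 := congrArg (fun f => (PowerSeries.X : ℚ⟦X⟧)^(m+1) * f) key
    -- LHS: X^(m+1) * (2 * Qs h (h-(m+1))) = 2 * (X^(m+1) * Qs h (h-(m+1))) = 2 * chebAux(m+1) * Qs h h
    have l : (PowerSeries.X : ℚ⟦X⟧)^(m+1) * (2 * Qs h (h-(m+1)))
        = 2 * ((chebAux (m+1) : ℚ[X]) : ℚ⟦X⟧) * Qs h h := by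
      rw [show (PowerSeries.X : ℚ⟦X⟧)^(m+1) * (2 * Qs h (h-(m+1)))
          = 2 * ((PowerSeries.X : ℚ⟦X⟧)^(m+1) * Qs h (h-(m+1))) from by ring, e1]
      ring
    have r : (PowerSeries.X : ℚ⟦X⟧)^(m+1) * (PowerSeries.X * (Qs h (h-(m+2)) + Qs h (h-m)))
        = (PowerSeries.X : ℚ⟦X⟧)^(m+2) * Qs h (h-(m+2))
          + PowerSeries.X^2 * (((chebAux m : ℚ[X]) : ℚ⟦X⟧) * Qs h h) := by
      rw [← e2]
      ring
    rw [l, r] at key2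
    have coes : ((chebAux (m+2) : ℚ[X]) : ℚ⟦X⟧)
        = 2 * ((chebAux (m+1) : ℚ[X]) : ℚ⟦X⟧) - PowerSeries.X^2 * ((chebAux m : ℚ[X]) : ℚ⟦X⟧) := by
      rw [show (chebAux (m+2) : ℚ[X]) = 2 * chebAux (m+1) - Polynomial.X^2 * chebAux m from rfl]
      rw [Polynomial.coe_sub, Polynomial.coe_mul, Polynomial.coe_mul, Polynomial.coe_pow,
        Polynomial.coe_X, coe_two]
    rw [coes]
    linear_combination -key2


theorem master (g : ℕ) :
    ((chebRev (g+2) : ℚ[X]) : ℚ⟦X⟧) * Qs (g+1) (g+1) = PowerSeries.X ^ (g+1) := by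
  have ch := Qs_key (g+1) (g+1) le_rfl
  rw [Nat.sub_self] at ch
  have c1 := Qs_key (g+1) g (by omega)
  rw [show g + 1 - g = 1 from by omega] at c1
  have q0 := Qs_zero (g+1)
  have coes : ((chebRev (g+2) : ℚ[X]) : ℚ⟦X⟧)
      = ((chebAux (g+1) : ℚ[X]) : ℚ⟦X⟧) - PowerSeries.X^2 * ((chebAux g : ℚ[X]) : ℚ⟦X⟧) := by
    rw [chebRev_eq_aux g, Polynomial.coe_sub, Polynomial.coe_mul, Polynomial.coe_pow,
      Polynomial.coe_X]
  rw [coes]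
  linear_combination (-1 : ℚ⟦X⟧) * ch + (PowerSeries.X:ℚ⟦X⟧)^(g+1) * q0
    + (PowerSeries.X:ℚ⟦X⟧)^2 * c1

open scoped Classical in
noncomputable def orSplit {α : Type*} (p q : α → Prop) (hdisj : ∀ a, p a → q a → False) :
    {a // p a ∨ q a} ≃ {a // p a} ⊕ {a // q a} where
  toFun x := if hp : p x.1 then Sum.inl ⟨x.1, hp⟩ else Sum.inr ⟨x.1, x.2.resolve_left hp⟩
  invFun := Sum.elim (fun a => ⟨a.1, Or.inl a.2⟩) (fun a => ⟨a.1, Or.inr a.2⟩)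
  left_inv x := by by_cases hp : p x.1 <;> simp [hp]
  right_inv := by
    rintro (⟨a, ha⟩ | ⟨a, ha⟩)
    · simp [ha]
    · have hp : ¬ p a := fun hp => (hdisj a hp ha)
      simp [hp]


theorem V_eq_two (n h : ℕ) (h1 : 1 ≤ h) : V n h = 2 * Ncount h n (h:ℤ) := by
  unfold V Ncount
  rw [two_mul]
  have e : {ε : Fin n → Bool // (∀ k ≤ n, |walkSum n ε k| ≤ (h : ℤ)) ∧ |walkSum n ε n| = (h : ℤ)}
      ≃ {ε : Fin n → Bool // (walkAdm h n ε ∧ walkSum n ε n = (h:ℤ))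
          ∨ (walkAdm h n ε ∧ walkSum n ε n = -(h:ℤ))} := by
    refine Equiv.subtypeEquivRight fun ε => ?_
    rw [abs_eq (by positivity : (0:ℤ) ≤ (h:ℤ))]
    unfold walkAdm
    tauto
  rw [Nat.card_congr (e.trans (orSplit _ _ (fun ε hp hq => by
    have := hp.2; have := hq.2; omega)))]
  rw [Nat.card_sum]
  congr 1
  exact Ncount_neg h n (h:ℤ)

theorem V_eq_zero' (n : ℕ) : V n 0 = Ncount 0 n 0 := by
  unfold V Ncount
  apply Nat.card_congr
  refine Equiv.subtypeEquivRight fun ε => ?_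
  unfold walkAdm
  constructor
  · rintro ⟨a, b⟩; exact ⟨a, by simpa using b⟩
  · rintro ⟨a, b⟩; exact ⟨a, by simp [b]⟩

theorem prob_p_eq_coeff_inv_rev_chebyshevT (h n : ℕ) (hn : 1 ≤ n) :
    (V n h : ℚ) / 2 ^ n =
      PowerSeries.coeff (R := ℚ) n
        (2 * PowerSeries.X ^ h *
          (((Polynomial.Chebyshev.T ℚ ((h : ℤ) + 1)).reverse : PowerSeries ℚ))⁻¹) := by
  have hrev : (Polynomial.Chebyshev.T ℚ ((h:ℤ) + 1)).reverse = chebRev (h+1) := by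
    rw [show ((h:ℤ)+1) = (((h+1:ℕ)):ℤ) from by push_cast; ring]
    exact reverse_T_eq (h+1)
  rw [hrev]
  rcases Nat.eq_zero_or_pos h with h0 | hpos
  · subst h0
    have hone : ((chebRev 1 : ℚ[X]) : ℚ⟦X⟧) = 1 := by
      rw [show (chebRev 1 : ℚ[X]) = 1 from rfl, Polynomial.coe_one]
    have hinv : ((1:ℚ⟦X⟧))⁻¹ = 1 := by
      have := PowerSeries.mul_inv_cancel (1:ℚ⟦X⟧) (by simp)
      simpa using this
    rw [hone, hinv]
    have hN : Ncount 0 n 0 = 0 := by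
      obtain ⟨m, rfl⟩ : ∃ m, n = m + 1 := ⟨n - 1, by omega⟩
      rw [Ncount_succ, if_pos (by simp)]
      rw [show ((0:ℤ) - 1) = -1 from by ring, show ((0:ℤ) + 1) = 1 from by ring]
      rw [Ncount_out (by norm_num), Ncount_out (by norm_num)]
    rw [V_eq_zero', hN]
    rw [mul_one, pow_zero, mul_one, two_eq_C, PowerSeries.coeff_C, if_neg (by omega)]
    simp
  · obtain ⟨g, rfl⟩ : ∃ g, h = g + 1 := ⟨h - 1, by omega⟩
    set Q : ℚ⟦X⟧ := ((chebRev (g+2) : ℚ[X]) : ℚ⟦X⟧) with hQ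
    have hc : PowerSeries.constantCoeff (R := ℚ) Q ≠ 0 := by
      rw [hQ, Polynomial.constantCoeff_coe, chebRev_coeff_zero (g+1)]
      positivity
    have hinv : Q * Q⁻¹ = 1 := PowerSeries.mul_inv_cancel Q hc
    have expand : 2 * (PowerSeries.X:ℚ⟦X⟧) ^ (g+1) * Q⁻¹ = 2 * Qs (g+1) (g+1) := by
      rw [← master g, ← hQ]
      calc 2 * (Q * Qs (g+1) (g+1)) * Q⁻¹ = (Q * Q⁻¹) * Qs (g+1) (g+1) * 2 := by ring
        _ = 2 * Qs (g+1) (g+1) := by rw [hinv]; ring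
    rw [expand]
    rw [V_eq_two n (g+1) (by omega)]
    rw [two_eq_C, PowerSeries.coeff_C_mul]
    simp only [Qs, PowerSeries.coeff_mk]
    push_cast
    ring
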